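/- Let N ∈ ℕ and let A be a real square matrix indexed by {0,…,N} that is almost upper triangular, i.e. A i j = 0 whenever j + 1 < i. Then det(A) = ∑_{j=0}^{N} A 0 j · (∏_{i=1}^{j} (−A i (i−1))) · det(A_{[j+1,N]}), where A_{[j+1,N]} is the submatrix of A obtained by keeping rows and columns with indices in [j+1, N], and with the convention that the determinant of the empty matrix (case j = N) equals 1. -/

import Mathlib

/-- Determinant of the square submatrix `(A i j)_{a ≤ i,j ≤ b}`; equals `1` when `a > b`
(empty matrix). -/
noncomputable def subDet (A : ℕ → ℕ → ℝ) (a b : ℕ) : ℝ :=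
  Matrix.det (Matrix.of fun i j : Fin (b + 1 - a) => A (a + i.1) (a + j.1))

lemma subDet_congr (A B : ℕ → ℕ → ℝ) (a b a' b' : ℕ) (h : b + 1 - a = b' + 1 - a')
    (he : ∀ i j, i < b' + 1 - a' → j < b' + 1 - a' → A (a + i) (a + j) = B (a' + i) (a' + j)) :
    subDet A a b = subDet B a' b' := by
  unfold subDet
  have hm : (Matrix.of fun i j : Fin (b + 1 - a) => A (a + i.1) (a + j.1)) =
      Matrix.reindex (finCongr h).symm (finCongr h).symm
        (Matrix.of fun i j : Fin (b' + 1 - a') => B (a' + i.1) (a' + j.1)) := by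
    ext i j
    simp only [Matrix.reindex_apply, Matrix.submatrix_apply, Equiv.symm_symm, Matrix.of_apply,
      finCongr_apply, Fin.coe_cast]
    exact he i.1 j.1 (h ▸ i.isLt) (h ▸ j.isLt)
  rw [hm, Matrix.det_reindex_self]

lemma prod_shift (A : ℕ → ℕ → ℝ) (k : ℕ) :
    ∏ i ∈ Finset.Icc 1 (k + 1), (-(A i (i - 1))) =
      (-(A 1 0)) * ∏ i ∈ Finset.Icc 1 k, (-(A (i + 1) i)) := by
  induction k with
  | zero => simp
  | succ k ih =>
    rw [Finset.prod_Icc_succ_top (show 1 ≤ k + 1 + 1 by omega), ih,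
      Finset.prod_Icc_succ_top (show 1 ≤ k + 1 by omega)]
    simp only [Nat.add_sub_cancel]
    ring

/-- Lemma 1.2 (expansion of the determinant of an almost upper triangular matrix
along its first row). -/
theorem det_expansion_almost_upper_triangular (N : ℕ) (A : ℕ → ℕ → ℝ)
    (hA : ∀ i j, i ≤ N → j ≤ N → j + 1 < i → A i j = 0) :
    subDet A 0 N =
      ∑ j ∈ Finset.range (N + 1),
        A 0 j * (∏ i ∈ Finset.Icc 1 j, (-(A i (i - 1)))) * subDet A (j + 1) N := by
  induction N generalizing A with
  | zero =>
    simp [subDet, Matrix.det_fin_one, Matrix.det_fin_zero]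
  | succ N ih =>
    -- shifted matrices
    set A' : ℕ → ℕ → ℝ := fun i j => A (i + 1) (j + 1) with hA'def
    set C' : ℕ → ℕ → ℝ := fun i j => if i = 0 then A 0 (j + 1) else A (i + 1) (j + 1) with hC'def
    -- Step 1: column expansion
    have key : subDet A 0 (N + 1) = A 0 0 * subDet A' 0 N + (-(A 1 0)) * subDet C' 0 N := by
      have hM : subDet A 0 (N + 1) =
          Matrix.det (Matrix.of fun i j : Fin (N + 2) => A i.1 j.1) := by
        unfold subDet
        congr 1
        ext i j
        simp
      rw [hM, Matrix.det_succ_column_zero, Fin.sum_univ_succ, Fin.sum_univ_succ]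
      have hv : ∀ i : Fin (N + 1), (((Fin.succ 0 : Fin (N + 2)).succAbove i) : ℕ) =
          if i.1 = 0 then 0 else i.1 + 1 := by
        intro i
        rw [Fin.succAbove]
        rcases Nat.eq_zero_or_pos i.1 with h | h
        · rw [if_pos (by simp [Fin.lt_def]; exact Fin.ext h)]
          simp [h]
        · rw [if_neg (by simp [Fin.lt_def]; exact fun e => by simp [e] at h)]
          rw [if_neg (by omega)]
          simp
      have hsum0 : (∑ i : Fin N, (-1 : ℝ) ^ ((i.succ.succ : Fin (N + 2)) : ℕ) *
          (Matrix.of fun i j : Fin (N + 2) => A i.1 j.1) i.succ.succ 0 *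
          ((Matrix.of fun i j : Fin (N + 2) => A i.1 j.1).submatrix i.succ.succ.succAbove
            Fin.succ).det) = 0 := by
        apply Finset.sum_eq_zero
        intro i _
        simp only [Matrix.of_apply, Fin.val_succ, Fin.val_zero]
        rw [hA (i.1 + 1 + 1) 0 (by omega) (by omega) (by omega)]
        ring
      have h0det : ((Matrix.of fun i j : Fin (N + 2) => A i.1 j.1).submatrix
          (Fin.succAbove 0) Fin.succ).det = subDet A' 0 N := by
        unfold subDet
        congr 1
        ext i j
        simp only [Matrix.submatrix_apply, Matrix.of_apply, Fin.val_succ, hA'def,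
          Fin.succAbove_zero, Nat.zero_add]
      have h1det : ((Matrix.of fun i j : Fin (N + 2) => A i.1 j.1).submatrix
          (Fin.succ 0).succAbove Fin.succ).det = subDet C' 0 N := by
        unfold subDet
        congr 1
        ext i j
        simp only [Matrix.submatrix_apply, Matrix.of_apply, Fin.val_succ, hC'def,
          hv i, Nat.zero_add]
        split_ifs <;> rfl
      rw [hsum0, h0det, h1det]
      simp only [Matrix.of_apply, Fin.val_zero, Fin.val_succ, Nat.zero_add, pow_zero, pow_one,
        add_zero]
      ring
    -- Step 2: IH for shifted matrices
    have ihA : subDet A' 0 N =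
        ∑ j ∈ Finset.range (N + 1),
          A' 0 j * (∏ i ∈ Finset.Icc 1 j, (-(A' i (i - 1)))) * subDet A' (j + 1) N := by
      apply ih
      intro i j hi hj h
      exact hA (i + 1) (j + 1) (by omega) (by omega) (by omega)
    have ihC : subDet C' 0 N =
        ∑ j ∈ Finset.range (N + 1),
          C' 0 j * (∏ i ∈ Finset.Icc 1 j, (-(C' i (i - 1)))) * subDet C' (j + 1) N := by
      apply ih
      intro i j hi hj h
      rcases i with _ | i
      · omega
      · simp only [hC'def, Nat.succ_ne_zero, if_false]
        exact hA (i + 2) (j + 1) (by omega) (by omega) (by omega)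
    have h4 : subDet A (0 + 1) (N + 1) = subDet A' 0 N := by
      apply subDet_congr
      · omega
      · intro i j hi hj
        simp only [hA'def]
        congr 1 <;> omega
    conv_rhs => rw [Finset.sum_range_succ']
    have e1 : ∑ k ∈ Finset.range (N + 1),
        A 0 (k + 1) * (∏ i ∈ Finset.Icc 1 (k + 1), (-(A i (i - 1)))) * subDet A (k + 1 + 1) (N + 1)
        = ∑ k ∈ Finset.range (N + 1),
          (-(A 1 0)) * (C' 0 k * (∏ i ∈ Finset.Icc 1 k, (-(C' i (i - 1)))) * subDet C' (k + 1) N) := by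
      apply Finset.sum_congr rfl
      intro k hk
      simp only [Finset.mem_range] at hk
      have h1 : A 0 (k + 1) = C' 0 k := by simp [hC'def]
      have h2 : subDet A (k + 1 + 1) (N + 1) = subDet C' (k + 1) N := by
        apply subDet_congr
        · omega
        · intro i j hi hj
          simp only [hC'def]
          rw [if_neg (by omega)]
          congr 1 <;> omega
      have h3 : ∏ i ∈ Finset.Icc 1 (k + 1), (-(A i (i - 1))) =
          (-(A 1 0)) * ∏ i ∈ Finset.Icc 1 k, (-(C' i (i - 1))) := by
        rw [prod_shift]
        congr 1
        apply Finset.prod_congr rfl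
        intro i hi
        simp only [Finset.mem_Icc] at hi
        simp only [hC'def]
        rw [if_neg (by omega)]
        congr 2 <;> omega
      rw [h1, h2, h3]
      ring
    rw [e1, ← Finset.mul_sum, ← ihC, key, h4]
    have hIcc : (Finset.Icc 1 0 : Finset ℕ) = ∅ := by decide
    rw [hIcc]
    simp only [Finset.prod_empty]
    ring
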